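/- Let A, B ∈ ℂ with B ≠ 0, φ_0 = A+B, φ_n = B for n ≥ 1, and let n ≥ 2. Suppose p(z) = Σ_{k=0}^{n} c_k z^k satisfies ⟨p, z^k⟩_b = 0 for k = 0, …, n−1 in the induced inner product. Set T_0 = 1 + |A|² + A·conj(B) and T_1 = −conj(T_0) − |B|². Then the coefficients satisfy the three-term recurrence conj(T_0)·c_{k+1} + (T_1 − T_0)·c_k + T_0·c_{k−1} = 0 for k = 1, …, n−2. -/

import Mathlib

open Finset Polynomial Complex

noncomputable def dbInner (φ : ℕ → ℂ) (j k : ℕ) : ℂ :=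
  (if j = k then 1 else 0) +
    if j ≤ k then ∑ s ∈ Finset.range (j + 1), (starRingEnd ℂ) (φ s) * φ (k - j + s)
    else ∑ s ∈ Finset.range (k + 1), φ s * (starRingEnd ℂ) (φ (j - k + s))

noncomputable def polyInner (φ : ℕ → ℂ) (p q : Polynomial ℂ) : ℂ :=
  ∑ j ∈ p.support, ∑ k ∈ q.support, p.coeff j * (starRingEnd ℂ) (q.coeff k) * dbInner φ j k

lemma dbInner_eq (A B : ℂ) (j k : ℕ) :
    dbInner (fun m => if m = 0 then A + B else B) j k =
      if j = k then 1 + (starRingEnd ℂ) (A + B) * (A + B) + (j : ℂ) * ((starRingEnd ℂ) B * B)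
      else if j < k then (starRingEnd ℂ) (A + B) * B + (j : ℂ) * ((starRingEnd ℂ) B * B)
      else (A + B) * (starRingEnd ℂ) B + (k : ℂ) * (B * (starRingEnd ℂ) B) := by
  unfold dbInner
  rcases lt_trichotomy j k with h | h | h
  · rw [if_neg h.ne, if_pos h.le, if_neg h.ne, if_pos h]
    have hstep : ∀ s ∈ Finset.range (j + 1),
        (starRingEnd ℂ) (if s = 0 then A + B else B) *
          (if k - j + s = 0 then A + B else B)
        = (starRingEnd ℂ) (if s = 0 then A + B else B) * B := by
      intro s _
      rw [if_neg (by omega : ¬ k - j + s = 0)]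
    rw [Finset.sum_congr rfl hstep, Finset.sum_range_succ']
    simp [Finset.sum_const, nsmul_eq_mul]
    ring
  · subst h
    rw [if_pos rfl, if_pos le_rfl, if_pos rfl]
    have hstep : ∀ s ∈ Finset.range (j + 1),
        (starRingEnd ℂ) (if s = 0 then A + B else B) *
          (if j - j + s = 0 then A + B else B)
        = (starRingEnd ℂ) (if s = 0 then A + B else B) * (if s = 0 then A + B else B) := by
      intro s _
      rw [Nat.sub_self, Nat.zero_add]
    rw [Finset.sum_congr rfl hstep, Finset.sum_range_succ']
    simp [Finset.sum_const, nsmul_eq_mul]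
    ring
  · rw [if_neg h.ne', if_neg (not_le.mpr h), if_neg h.ne', if_neg (lt_asymm h)]
    have hstep : ∀ s ∈ Finset.range (k + 1),
        (if s = 0 then A + B else B) *
          (starRingEnd ℂ) (if j - k + s = 0 then A + B else B)
        = (if s = 0 then A + B else B) * (starRingEnd ℂ) B := by
      intro s _
      rw [if_neg (by omega : ¬ j - k + s = 0)]
    rw [Finset.sum_congr rfl hstep, Finset.sum_range_succ']
    simp [Finset.sum_const, nsmul_eq_mul]
    ring

lemma dbInner_comb (A B : ℂ) (m j : ℕ) :
    dbInner (fun s => if s = 0 then A + B else B) j m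
      - 2 * dbInner (fun s => if s = 0 then A + B else B) j (m + 1)
      + dbInner (fun s => if s = 0 then A + B else B) j (m + 2) =
    (if j = m + 2 then 1 + (starRingEnd ℂ) A * A + (starRingEnd ℂ) A * B
      else if j = m + 1 then
        (-(1 + (starRingEnd ℂ) A * A + (starRingEnd ℂ) A * B) - (starRingEnd ℂ) B * B)
          - (1 + (starRingEnd ℂ) A * A + A * (starRingEnd ℂ) B)
      else if j = m then 1 + (starRingEnd ℂ) A * A + A * (starRingEnd ℂ) B
      else 0) := by
  rw [dbInner_eq, dbInner_eq, dbInner_eq]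
  split_ifs <;> first | omega | (subst_vars; push_cast [map_add]; ring)

lemma polyInner_eq (φ : ℕ → ℂ) (n : ℕ) (c : ℕ → ℂ) (k : ℕ) :
    polyInner φ (∑ j ∈ Finset.range (n + 1), Polynomial.C (c j) * X ^ j) (X ^ k)
      = ∑ j ∈ Finset.range (n + 1), c j * dbInner φ j k := by
  unfold polyInner
  set p : Polynomial ℂ := ∑ j ∈ Finset.range (n + 1), Polynomial.C (c j) * X ^ j with hp
  have hcoeff : ∀ j, p.coeff j = if j ∈ Finset.range (n + 1) then c j else 0 := by
    intro j
    rw [hp, Polynomial.finset_sum_coeff]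
    simp [Polynomial.coeff_C_mul, Polynomial.coeff_X_pow, Finset.sum_ite_eq]
  have hsupp : p.support ⊆ Finset.range (n + 1) := by
    intro j hj
    by_contra hjn
    exact (Polynomial.mem_support_iff.mp hj) (by rw [hcoeff j, if_neg hjn])
  have hXsupp : (X ^ k : Polynomial ℂ).support = {k} := Polynomial.support_X_pow k
  rw [hXsupp]
  simp only [Finset.sum_singleton, Polynomial.coeff_X_pow_self, map_one, mul_one]
  rw [Finset.sum_subset hsupp (fun x _ hx => by
    rw [Polynomial.notMem_support_iff.mp hx, zero_mul])]
  exact Finset.sum_congr rfl fun j hj => by rw [hcoeff j, if_pos hj]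

theorem stmt12 (A B : ℂ) (hB : B ≠ 0) (n : ℕ) (hn : 2 ≤ n) (c : ℕ → ℂ)
    (horth : ∀ k : ℕ, k < n →
      polyInner (fun m => if m = 0 then A + B else B)
        (∑ j ∈ Finset.range (n + 1), Polynomial.C (c j) * X ^ j) (X ^ k) = 0) :
    ∀ k : ℕ, 1 ≤ k → k ≤ n - 2 →
      (starRingEnd ℂ) (1 + (‖A‖ : ℂ) ^ 2 + A * (starRingEnd ℂ) B) * c (k + 1)
        + ((-(starRingEnd ℂ) (1 + (‖A‖ : ℂ) ^ 2 + A * (starRingEnd ℂ) B)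
              - (‖B‖ : ℂ) ^ 2)
            - (1 + (‖A‖ : ℂ) ^ 2 + A * (starRingEnd ℂ) B)) * c k
        + (1 + (‖A‖ : ℂ) ^ 2 + A * (starRingEnd ℂ) B) * c (k - 1) = 0 := by
  intro k hk1 hk2
  obtain ⟨m, rfl⟩ : ∃ m, k = m + 1 := ⟨k - 1, by omega⟩
  have E0 := horth m (by omega)
  have E1 := horth (m + 1) (by omega)
  have E2 := horth (m + 2) (by omega)
  rw [polyInner_eq] at E0 E1 E2
  have S : ∑ j ∈ Finset.range (n + 1),
      (c j * (dbInner (fun s => if s = 0 then A + B else B) j m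
        - 2 * dbInner (fun s => if s = 0 then A + B else B) j (m + 1)
        + dbInner (fun s => if s = 0 then A + B else B) j (m + 2))) = 0 := by
    have : ∀ j ∈ Finset.range (n + 1),
        c j * (dbInner (fun s => if s = 0 then A + B else B) j m
          - 2 * dbInner (fun s => if s = 0 then A + B else B) j (m + 1)
          + dbInner (fun s => if s = 0 then A + B else B) j (m + 2))
        = c j * dbInner (fun s => if s = 0 then A + B else B) j m
          - 2 * (c j * dbInner (fun s => if s = 0 then A + B else B) j (m + 1))
          + c j * dbInner (fun s => if s = 0 then A + B else B) j (m + 2) := by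
      intro j _; ring
    rw [Finset.sum_congr rfl this, Finset.sum_add_distrib, Finset.sum_sub_distrib,
      ← Finset.mul_sum, E0, E1, E2]
    ring
  rw [Finset.sum_congr rfl (fun j _ => by rw [dbInner_comb A B m j])] at S
  have hsplit : ∀ j ∈ Finset.range (n + 1),
      c j * (if j = m + 2 then 1 + (starRingEnd ℂ) A * A + (starRingEnd ℂ) A * B
        else if j = m + 1 then
          (-(1 + (starRingEnd ℂ) A * A + (starRingEnd ℂ) A * B) - (starRingEnd ℂ) B * B)
            - (1 + (starRingEnd ℂ) A * A + A * (starRingEnd ℂ) B)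
        else if j = m then 1 + (starRingEnd ℂ) A * A + A * (starRingEnd ℂ) B
        else 0)
      = (if j = m + 2 then c j * (1 + (starRingEnd ℂ) A * A + (starRingEnd ℂ) A * B) else 0)
        + (if j = m + 1 then c j *
            ((-(1 + (starRingEnd ℂ) A * A + (starRingEnd ℂ) A * B) - (starRingEnd ℂ) B * B)
              - (1 + (starRingEnd ℂ) A * A + A * (starRingEnd ℂ) B)) else 0)
        + (if j = m then c j * (1 + (starRingEnd ℂ) A * A + A * (starRingEnd ℂ) B) else 0) := by
    intro j _
    split_ifs <;> first | omega | ring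
  rw [Finset.sum_congr rfl hsplit, Finset.sum_add_distrib, Finset.sum_add_distrib,
    Finset.sum_ite_eq' (Finset.range (n + 1)) (m + 2),
    Finset.sum_ite_eq' (Finset.range (n + 1)) (m + 1),
    Finset.sum_ite_eq' (Finset.range (n + 1)) m,
    if_pos (Finset.mem_range.mpr (by omega)),
    if_pos (Finset.mem_range.mpr (by omega)),
    if_pos (Finset.mem_range.mpr (by omega))] at S
  have habs : ∀ z : ℂ, ((‖z‖ : ℂ)) ^ 2 = (starRingEnd ℂ) z * z := by
    intro z
    rw [← Complex.normSq_eq_conj_mul_self, ← Complex.sq_norm]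
    norm_cast
  simp only [habs, Nat.add_sub_cancel, map_add, map_mul, map_one, Complex.conj_conj] at *
  linear_combination S
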